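/- Let d ≥ 2, let X be a d × d complex matrix, and let p ≥ p₀ ≥ 1 be real numbers. Then 2^(−1/p₀) * (σ₁(X)^p₀ + σ₂(X)^p₀)^(1/p₀) ≤ 2^(−1/p) * ‖X‖_p ≤ max( 2^(−1/p₀) * ‖X‖_{p₀}, σ₁(X) ), where ‖X‖_p = (∑ i, σ_i(X)^p)^(1/p) is the Schatten p-norm. -/

import Mathlib

open Matrix BigOperators

/-- The entries of `v` sorted in non-increasing order: `sortedDesc v 0` is the largest, etc. -/
noncomputable def sortedDesc {d : ℕ} (v : Fin d → ℝ) : Fin d → ℝ :=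
  fun k => v (Tuple.sort v k.rev)

/-- The singular values of `X` in non-increasing order:
`singularValues X 0 = σ₁(X)`, `singularValues X 1 = σ₂(X)`, ... -/
noncomputable def singularValues {d : ℕ} (X : Matrix (Fin d) (Fin d) ℂ) : Fin d → ℝ :=
  sortedDesc fun i => Real.sqrt ((Matrix.isHermitian_conjTranspose_mul_self X).eigenvalues i)

/-- The Schatten `p`-norm of `X`. -/
noncomputable def schattenNorm {d : ℕ} (p : ℝ) (X : Matrix (Fin d) (Fin d) ℂ) : ℝ :=
  (∑ i, singularValues X i ^ p) ^ (1 / p)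

lemma singularValues_nonneg {d : ℕ} (X : Matrix (Fin d) (Fin d) ℂ) (i : Fin d) :
    0 ≤ singularValues X i := Real.sqrt_nonneg _

lemma singularValues_le_zero {d : ℕ} (X : Matrix (Fin d) (Fin d) ℂ) (hd : 0 < d) (i : Fin d) :
    singularValues X i ≤ singularValues X ⟨0, hd⟩ := by
  have h0 : (⟨0, hd⟩ : Fin d) ≤ i := by simp [Fin.le_def]
  unfold singularValues sortedDesc
  exact Tuple.monotone_sort
    (fun i => Real.sqrt ((Matrix.isHermitian_conjTranspose_mul_self X).eigenvalues i))
    (Fin.rev_le_rev.mpr h0)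

/-- two-term power mean monotonicity -/
lemma two_pow_mean {a b p₀ p : ℝ} (ha : 0 ≤ a) (hb : 0 ≤ b) (hp₀ : 0 < p₀) (hpp : p₀ ≤ p) :
    ((a ^ p₀ + b ^ p₀) / 2) ^ (1 / p₀) ≤ ((a ^ p + b ^ p) / 2) ^ (1 / p) := by
  have hp : 0 < p := hp₀.trans_le hpp
  lift a to NNReal using ha
  lift b to NNReal using hb
  have key := NNReal.rpow_arith_mean_le_arith_mean2_rpow (1/2) (1/2) (a ^ p₀) (b ^ p₀)
    (by rw [add_halves]) ((one_le_div hp₀).2 hpp)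
  have h1 : (a ^ p₀) ^ (p / p₀) = a ^ p := by
    rw [← NNReal.rpow_mul]; congr 1; field_simp
  have h2 : (b ^ p₀) ^ (p / p₀) = b ^ p := by
    rw [← NNReal.rpow_mul]; congr 1; field_simp
  rw [h1, h2] at key
  have key2 : ((1/2 * a ^ p₀ + 1/2 * b ^ p₀) ^ (p / p₀)) ^ (1/p)
      ≤ (1/2 * a ^ p + 1/2 * b ^ p) ^ (1/p) :=
    NNReal.rpow_le_rpow key (by positivity)
  rw [← NNReal.rpow_mul] at key2
  have he : p / p₀ * (1/p) = 1/p₀ := by field_simp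
  rw [he] at key2
  have h := NNReal.coe_le_coe.mpr key2
  push_cast at h
  convert h using 2 <;> ring

lemma half_rpow {x : ℝ} (hx : 0 ≤ x) (p : ℝ) :
    (2 : ℝ) ^ (-(1 / p)) * x ^ (1 / p) = (x / 2) ^ (1 / p) := by
  rw [Real.div_rpow hx (by norm_num), Real.rpow_neg (by norm_num)]
  ring

/-- For `p ≥ p₀ ≥ 1`,
`2^(-1/p₀) (σ₁(X)^p₀ + σ₂(X)^p₀)^(1/p₀) ≤ 2^(-1/p) ‖X‖_p ≤ max(2^(-1/p₀) ‖X‖_{p₀}, σ₁(X))`. -/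
theorem schatten_kyfan_p0_bounds (d : ℕ) (hd : 2 ≤ d)
    (X : Matrix (Fin d) (Fin d) ℂ) (p p₀ : ℝ) (hp₀ : 1 ≤ p₀) (hp : p₀ ≤ p) :
    (2 : ℝ) ^ (-(1 / p₀)) *
        (singularValues X ⟨0, by omega⟩ ^ p₀ + singularValues X ⟨1, by omega⟩ ^ p₀) ^ (1 / p₀)
      ≤ (2 : ℝ) ^ (-(1 / p)) * schattenNorm p X
    ∧ (2 : ℝ) ^ (-(1 / p)) * schattenNorm p X
      ≤ max ((2 : ℝ) ^ (-(1 / p₀)) * schattenNorm p₀ X) (singularValues X ⟨0, by omega⟩) := by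
  have hp₀pos : (0:ℝ) < p₀ := lt_of_lt_of_le one_pos hp₀
  have hppos : (0:ℝ) < p := hp₀pos.trans_le hp
  simp only [schattenNorm]
  set S : Fin d → ℝ := singularValues X with hS
  have hSnn : ∀ i, 0 ≤ S i := singularValues_nonneg X
  set i0 : Fin d := ⟨0, by omega⟩
  set i1 : Fin d := ⟨1, by omega⟩
  have ha : 0 ≤ S i0 := hSnn i0
  have hb : 0 ≤ S i1 := hSnn i1
  have hSle : ∀ i, S i ≤ S i0 := singularValues_le_zero X (by omega)
  have hT : (0:ℝ) ≤ ∑ i, S i ^ p := Finset.sum_nonneg fun i _ => Real.rpow_nonneg (hSnn i) p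
  have hT₀ : (0:ℝ) ≤ ∑ i, S i ^ p₀ := Finset.sum_nonneg fun i _ => Real.rpow_nonneg (hSnn i) p₀
  have h2nn : (0:ℝ) ≤ 2 := by norm_num
  have hTh : (0:ℝ) ≤ (∑ i, S i ^ p) / 2 := div_nonneg hT h2nn
  have hT₀h : (0:ℝ) ≤ (∑ i, S i ^ p₀) / 2 := div_nonneg hT₀ h2nn
  have hpairnn : (0:ℝ) ≤ S i0 ^ p + S i1 ^ p :=
    add_nonneg (Real.rpow_nonneg ha _) (Real.rpow_nonneg hb _)
  have hpair : S i0 ^ p + S i1 ^ p ≤ ∑ i, S i ^ p := by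
    have hne : i0 ≠ i1 := by simp [i0, i1, Fin.ext_iff]
    calc S i0 ^ p + S i1 ^ p = ∑ i ∈ ({i0, i1} : Finset (Fin d)), S i ^ p :=
          (Finset.sum_pair (f := fun i => S i ^ p) hne).symm
      _ ≤ ∑ i, S i ^ p := Finset.sum_le_sum_of_subset_of_nonneg
          (Finset.subset_univ _) (fun i _ _ => Real.rpow_nonneg (hSnn i) p)
  constructor
  · rw [half_rpow (add_nonneg (Real.rpow_nonneg ha _) (Real.rpow_nonneg hb _)) p₀, half_rpow hT p]
    calc ((S i0 ^ p₀ + S i1 ^ p₀) / 2) ^ (1 / p₀)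
        ≤ ((S i0 ^ p + S i1 ^ p) / 2) ^ (1 / p) := two_pow_mean ha hb hp₀pos hp
      _ ≤ ((∑ i, S i ^ p) / 2) ^ (1 / p) :=
          Real.rpow_le_rpow (div_nonneg hpairnn h2nn) (by linarith) (by positivity)
  · rw [half_rpow hT p, half_rpow hT₀ p₀]
    set A : ℝ := S i0 with hA
    set B : ℝ := ((∑ i, S i ^ p₀) / 2) ^ (1 / p₀) with hB
    have hBnn : 0 ≤ B := Real.rpow_nonneg hT₀h _
    have hApow : 0 ≤ A ^ (p - p₀) := Real.rpow_nonneg ha _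
    have hsum : ∑ i, S i ^ p ≤ A ^ (p - p₀) * ∑ i, S i ^ p₀ := by
      rw [Finset.mul_sum]
      apply Finset.sum_le_sum
      intro i _
      have h1 : S i ^ p = S i ^ (p - p₀) * S i ^ p₀ := by
        rw [← Real.rpow_add' (hSnn i) (by intro hc; apply hppos.ne'; linarith)]
        congr 1; ring
      rw [h1]
      exact mul_le_mul_of_nonneg_right
        (Real.rpow_le_rpow (hSnn i) (hSle i) (by linarith)) (Real.rpow_nonneg (hSnn i) p₀)
    have hle : (∑ i, S i ^ p) / 2 ≤ A ^ (p - p₀) * ((∑ i, S i ^ p₀) / 2) := by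
      rw [div_le_iff₀ (by norm_num : (0:ℝ) < 2)]
      calc ∑ i, S i ^ p ≤ A ^ (p - p₀) * ∑ i, S i ^ p₀ := hsum
        _ = A ^ (p - p₀) * ((∑ i, S i ^ p₀) / 2) * 2 := by ring
    have e1 : (A ^ (p - p₀)) ^ (1/p) = A ^ ((p - p₀)/p) := by
      rw [← Real.rpow_mul ha]; congr 1; field_simp
    have e2 : ((∑ i, S i ^ p₀) / 2) ^ (1/p) = B ^ (p₀ / p) := by
      rw [hB, ← Real.rpow_mul hT₀h]; congr 1; field_simp
    have step : ((∑ i, S i ^ p) / 2) ^ (1 / p) ≤ A ^ ((p - p₀)/p) * B ^ (p₀ / p) := by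
      calc ((∑ i, S i ^ p) / 2) ^ (1/p)
          ≤ (A ^ (p - p₀) * ((∑ i, S i ^ p₀) / 2)) ^ (1/p) :=
            Real.rpow_le_rpow hTh hle (by positivity)
        _ = A ^ ((p - p₀)/p) * B ^ (p₀ / p) := by
            rw [Real.mul_rpow hApow hT₀h, e1, e2]
    refine step.trans ?_
    have hθ0 : 0 ≤ p₀ / p := by positivity
    have hθ1 : 0 ≤ (p - p₀) / p := div_nonneg (by linarith) hppos.le
    have hsum1 : (p - p₀)/p + p₀/p = 1 := by field_simp; ring
    rcases le_total A B with hAB | hAB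
    · refine le_trans ?_ (le_max_left _ _)
      calc A ^ ((p - p₀)/p) * B ^ (p₀/p)
          ≤ B ^ ((p - p₀)/p) * B ^ (p₀/p) :=
            mul_le_mul_of_nonneg_right (Real.rpow_le_rpow ha hAB hθ1)
              (Real.rpow_nonneg hBnn _)
        _ = B := by
            rw [← Real.rpow_add' hBnn (by rw [hsum1]; norm_num), hsum1, Real.rpow_one]
    · refine le_trans ?_ (le_max_right _ _)
      calc A ^ ((p - p₀)/p) * B ^ (p₀/p)
          ≤ A ^ ((p - p₀)/p) * A ^ (p₀/p) :=
            mul_le_mul_of_nonneg_left (Real.rpow_le_rpow hBnn hAB hθ0)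
              (Real.rpow_nonneg ha _)
        _ = A := by
            rw [← Real.rpow_add' ha (by rw [hsum1]; norm_num), hsum1, Real.rpow_one]
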